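/- Let o, t, m be natural numbers and R' a real o×t matrix. For a real o×t matrix Y, say Crit'(Y) holds if trace((Y − R')*N'ᵀ) = 0 for every real o×t matrix N' that can be written N' = N'₁ + N'₂ with the row space of N'₁ contained in the row space of Y and the column space of N'₂ contained in the column space of Y. Let W' be a real o×t matrix, W'' a real o×m matrix, W := fromColumns W' W'' the o×(t⊕m) block matrix, R := fromColumns R' 0, and Π := fromBlocks 1 0 0 0 the (t⊕m)×(t⊕m) matrix that is the identity on the first t coordinates and zero on the last m. Say Crit(W) holds if trace((W − R)*Π*Nᵀ) = 0 for every real o×(t⊕m) matrix N that can be written N = N₁ + N₂ with the row space of N₁ contained in the row space of W and the column space of N₂ contained in the column space of W. Then: Crit(W) holds if and only if Crit'(W') holds and every vector in the column space of W'' has dot product 0 with every vector in the column space of W' − R'. -/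

import Mathlib

open Matrix

/-- The column space of a real matrix `M`, i.e. the range of `x ↦ M.mulVec x`. -/
def colSpace {a b : Type*} [Fintype b] (M : Matrix a b ℝ) : Submodule ℝ (a → ℝ) :=
  LinearMap.range M.mulVecLin

/-- The row space of a real matrix `M`, i.e. the column space of `Mᵀ`. -/
def rowSpace {a b : Type*} [Fintype a] (M : Matrix a b ℝ) : Submodule ℝ (b → ℝ) :=
  colSpace Mᵀ

/-- Criticality of `Y` for the Frobenius distance to `R'` on the determinantal variety:
`Y − R'` is trace-orthogonal to the tangent space `ℝ^o ⊗ rowspace(Y) + colspace(Y) ⊗ ℝ^t`. -/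
def Crit' {o t : ℕ} (R' Y : Matrix (Fin o) (Fin t) ℝ) : Prop :=
  ∀ N' : Matrix (Fin o) (Fin t) ℝ,
    (∃ N'₁ N'₂, N' = N'₁ + N'₂ ∧ rowSpace N'₁ ≤ rowSpace Y ∧ colSpace N'₂ ≤ colSpace Y) →
    ((Y - R') * N'ᵀ).trace = 0

/-- Criticality of `W` for the seminorm distance `‖· − R‖²_{ΠΠᵀ}` on the determinantal
variety, where `R = (R' | 0)` and `Π = fromBlocks 1 0 0 0`. -/
def Crit {o t m : ℕ} (R' : Matrix (Fin o) (Fin t) ℝ)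
    (W : Matrix (Fin o) (Fin t ⊕ Fin m) ℝ) : Prop :=
  ∀ N : Matrix (Fin o) (Fin t ⊕ Fin m) ℝ,
    (∃ N₁ N₂, N = N₁ + N₂ ∧ rowSpace N₁ ≤ rowSpace W ∧ colSpace N₂ ≤ colSpace W) →
    ((W - Matrix.fromCols R' (0 : Matrix (Fin o) (Fin m) ℝ)) *
        (Matrix.fromBlocks (1 : Matrix (Fin t) (Fin t) ℝ) 0 0
          (0 : Matrix (Fin m) (Fin m) ℝ)) * Nᵀ).trace = 0

section aux
variable {a b c : Type*}

lemma mem_colSpace [Fintype b] {M : Matrix a b ℝ} {x : a → ℝ} :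
    x ∈ colSpace M ↔ ∃ v, M.mulVec v = x := Iff.rfl

lemma colSpace_mul_le [Fintype b] [Fintype c] (P : Matrix a b ℝ) (Q : Matrix b c ℝ) :
    colSpace (P * Q) ≤ colSpace P := by
  rintro x ⟨v, rfl⟩
  exact ⟨Q.mulVec v, by simp [mulVecLin_apply, mulVec_mulVec]⟩

lemma rowSpace_mul_le [Fintype a] [Fintype b] (P : Matrix a c ℝ) (Q : Matrix b a ℝ) :
    rowSpace (Q * P) ≤ rowSpace P := by
  unfold rowSpace
  rw [transpose_mul]
  exact colSpace_mul_le _ _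

lemma exists_factor [Fintype b] [Fintype c] [DecidableEq c]
    {M : Matrix a c ℝ} {P : Matrix a b ℝ} (h : colSpace M ≤ colSpace P) :
    ∃ Q : Matrix b c ℝ, M = P * Q := by
  have h' : ∀ j : c, ∃ v : b → ℝ, P.mulVec v = fun i => M i j := by
    intro j
    exact h ⟨Pi.single j 1, by simp [mulVecLin_apply]; rfl⟩
  choose q hq using h'
  refine ⟨of fun i j => q j i, ?_⟩
  ext i j
  have := congrFun (hq j) i
  simpa [mul_apply, mulVec, dotProduct] using this.symm

lemma exists_factor_row {a : Type*} [Fintype a] [Fintype c] [DecidableEq a]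
    {M : Matrix a b ℝ} {P : Matrix c b ℝ} (h : rowSpace M ≤ rowSpace P) :
    ∃ Q : Matrix a c ℝ, M = Q * P := by
  obtain ⟨Q, hQ⟩ := exists_factor (M := Mᵀ) (P := Pᵀ) h
  exact ⟨Qᵀ, by rw [← transpose_transpose M, hQ]; simp⟩

lemma colSpace_fromCols {n₁ n₂ : Type*} [Fintype n₁] [Fintype n₂]
    (A : Matrix a n₁ ℝ) (B : Matrix a n₂ ℝ) :
    colSpace (fromCols A B) = colSpace A ⊔ colSpace B := by
  apply le_antisymm
  · rintro x ⟨v, rfl⟩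
    have hv : v = Sum.elim (fun i => v (Sum.inl i)) (fun i => v (Sum.inr i)) := by
      ext (i | i) <;> rfl
    rw [mulVecLin_apply, hv, fromCols_mulVec_sumElim]
    exact Submodule.add_mem_sup ⟨_, rfl⟩ ⟨_, rfl⟩
  · refine sup_le ?_ ?_
    · rintro x ⟨v, rfl⟩
      refine ⟨Sum.elim v 0, ?_⟩
      simp [mulVecLin_apply, fromCols_mulVec_sumElim]
    · rintro x ⟨v, rfl⟩
      refine ⟨Sum.elim 0 v, ?_⟩
      simp [mulVecLin_apply, fromCols_mulVec_sumElim]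

lemma exists_sup_decomp {n₁ n₂ : Type*} [Fintype n₁] [Fintype n₂] [Fintype c] [DecidableEq c]
    {C : Matrix a c ℝ} {A : Matrix a n₁ ℝ} {B : Matrix a n₂ ℝ}
    (h : colSpace C ≤ colSpace A ⊔ colSpace B) :
    ∃ (P : Matrix n₁ c ℝ) (Q : Matrix n₂ c ℝ), C = A * P + B * Q := by
  have h' : ∀ j : c, ∃ (p : n₁ → ℝ) (q : n₂ → ℝ),
      A.mulVec p + B.mulVec q = fun i => C i j := by
    intro j
    have hj : (fun i => C i j) ∈ colSpace A ⊔ colSpace B :=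
      h ⟨Pi.single j 1, by simp [mulVecLin_apply]; rfl⟩
    rw [Submodule.mem_sup] at hj
    obtain ⟨y, ⟨p, rfl⟩, z, ⟨q, rfl⟩, hyz⟩ := hj
    exact ⟨p, q, hyz⟩
  choose p q hpq using h'
  refine ⟨of fun i j => p j i, of fun i j => q j i, ?_⟩
  ext i j
  have := congrFun (hpq j) i
  simpa [mul_apply, mulVec, dotProduct, Pi.add_apply] using this.symm

lemma trace_mul_transpose_eq [Fintype a] [Fintype b] (A B : Matrix a b ℝ) :
    (A * Bᵀ).trace = ∑ j, (fun i => B i j) ⬝ᵥ (fun i => A i j) := by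
  simp only [trace, diag, mul_apply, transpose_apply, dotProduct]
  rw [Finset.sum_comm]
  exact Finset.sum_congr rfl fun j _ => Finset.sum_congr rfl fun i _ => mul_comm _ _

end aux

lemma colSpace_zero {a b : Type*} [Fintype b] : colSpace (0 : Matrix a b ℝ) = ⊥ := by
  simp [colSpace]

lemma rowSpace_zero {a b : Type*} [Fintype a] : rowSpace (0 : Matrix a b ℝ) = ⊥ := by
  simp [rowSpace, colSpace]

lemma trace_key {o t m : ℕ} (R' W' : Matrix (Fin o) (Fin t) ℝ) (W'' : Matrix (Fin o) (Fin m) ℝ)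
    (N : Matrix (Fin o) (Fin t ⊕ Fin m) ℝ) :
    ((Matrix.fromCols W' W'' - Matrix.fromCols R' (0 : Matrix (Fin o) (Fin m) ℝ)) *
        (Matrix.fromBlocks (1 : Matrix (Fin t) (Fin t) ℝ) 0 0
          (0 : Matrix (Fin m) (Fin m) ℝ)) * Nᵀ).trace
      = ((W' - R') * (N.toCols₁)ᵀ).trace := by
  have h1 : Matrix.fromCols W' W'' - Matrix.fromCols R' (0 : Matrix (Fin o) (Fin m) ℝ)
      = Matrix.fromCols (W' - R') W'' := by
    ext i (j | j) <;> simp [fromCols]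
  conv_lhs => rw [← fromCols_toCols N]
  rw [h1, fromCols_mul_fromBlocks, transpose_fromCols, fromCols_mul_fromRows]
  simp

/-- The criticality criterion (critical_condition) in the proof of Theorem 4.2:
`W = (W' | W'')` is critical iff `W'` is critical for the Frobenius distance to `R'`
and `cspan(W'') ⟂ cspan(W' − R')`. -/
theorem crit_iff_crit'_and_orth (o t m : ℕ) (R' : Matrix (Fin o) (Fin t) ℝ)
    (W' : Matrix (Fin o) (Fin t) ℝ) (W'' : Matrix (Fin o) (Fin m) ℝ) :
    Crit R' (Matrix.fromCols W' W'') ↔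
      (Crit' R' W' ∧
        ∀ x ∈ colSpace W'', ∀ y ∈ colSpace (W' - R'), x ⬝ᵥ y = 0) := by
  constructor
  · intro hC
    constructor
    · rintro N' ⟨N'₁, N'₂, rfl, h1, h2⟩
      obtain ⟨E, rfl⟩ := exists_factor_row h1
      have hdecomp : Matrix.fromCols (E * W' + N'₂) (E * W'') =
          E * Matrix.fromCols W' W'' + Matrix.fromCols N'₂ (0 : Matrix (Fin o) (Fin m) ℝ) := by
        rw [mul_fromCols]
        ext i (j | j) <;> simp [fromCols]
      have hcs : colSpace (Matrix.fromCols N'₂ (0 : Matrix (Fin o) (Fin m) ℝ)) ≤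
          colSpace (Matrix.fromCols W' W'') := by
        rw [colSpace_fromCols, colSpace_fromCols, colSpace_zero]
        exact sup_le (le_sup_left.trans' h2) bot_le
      have key := hC (Matrix.fromCols (E * W' + N'₂) (E * W''))
        ⟨E * Matrix.fromCols W' W'', Matrix.fromCols N'₂ 0, hdecomp,
          rowSpace_mul_le _ _, hcs⟩
      rw [trace_key] at key
      simpa [toCols₁_fromCols] using key
    · rintro x ⟨v, rfl⟩ y ⟨u, rfl⟩
      set N' : Matrix (Fin o) (Fin t) ℝ := Matrix.of fun i j => W''.mulVec v i * u j with hN'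
      have hN : colSpace (Matrix.fromCols N' (0 : Matrix (Fin o) (Fin m) ℝ)) ≤
          colSpace (Matrix.fromCols W' W'') := by
        rw [colSpace_fromCols, colSpace_fromCols, colSpace_zero]
        refine sup_le (le_sup_right.trans' ?_) bot_le
        rintro z ⟨w, rfl⟩
        refine ⟨(u ⬝ᵥ w) • v, ?_⟩
        rw [mulVecLin_apply, mulVecLin_apply, mulVec_smul]
        ext i
        simp only [N', mulVec, dotProduct, of_apply, Pi.smul_apply, smul_eq_mul,
          Finset.mul_sum, Finset.sum_mul, mul_assoc]
        rw [Finset.sum_comm]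
        exact Finset.sum_congr rfl fun p _ => Finset.sum_congr rfl fun q _ => by ring
      have key := hC (Matrix.fromCols N' 0)
        ⟨0, Matrix.fromCols N' 0, (zero_add _).symm, by rw [rowSpace_zero]; exact bot_le, hN⟩
      rw [trace_key] at key
      rw [toCols₁_fromCols] at key
      rw [mulVecLin_apply, mulVecLin_apply]
      have : ((W' - R') * N'ᵀ).trace = (W''.mulVec v) ⬝ᵥ ((W' - R').mulVec u) := by
        simp only [trace, diag, mul_apply, transpose_apply, dotProduct, mulVec, N', of_apply,
          Finset.mul_sum]
        refine Finset.sum_congr rfl fun i _ => Finset.sum_congr rfl fun j _ => by ring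
      rw [← this, key]
  · rintro ⟨hc', horth⟩ N ⟨N₁, N₂, rfl, h1, h2⟩
    rw [trace_key]
    obtain ⟨E, rfl⟩ := exists_factor_row h1
    have hN₂ : colSpace (toCols₁ N₂) ≤ colSpace W' ⊔ colSpace W'' := by
      have hle : colSpace (toCols₁ N₂) ≤ colSpace N₂ := by
        conv_rhs => rw [← fromCols_toCols N₂]
        rw [colSpace_fromCols]
        exact le_sup_left
      exact hle.trans (h2.trans_eq (colSpace_fromCols W' W''))
    obtain ⟨P, Q, hPQ⟩ := exists_sup_decomp hN₂
    have htc : toCols₁ (E * Matrix.fromCols W' W'' + N₂)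
        = E * W' + (W' * P + W'' * Q) := by
      rw [← hPQ]
      ext i j
      simp [toCols₁, mul_apply, fromCols]
    rw [htc]
    have hre : E * W' + (W' * P + W'' * Q) = (E * W' + W' * P) + W'' * Q := by abel
    have hA : ((W' - R') * (E * W' + W' * P)ᵀ).trace = 0 :=
      hc' _ ⟨E * W', W' * P, rfl, rowSpace_mul_le _ _, colSpace_mul_le _ _⟩
    have hB : ((W' - R') * (W'' * Q)ᵀ).trace = 0 := by
      rw [trace_mul_transpose_eq]
      refine Finset.sum_eq_zero fun j _ => ?_
      refine horth _ ⟨fun k => Q k j, ?_⟩ _ ⟨Pi.single j 1, ?_⟩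
      · ext i
        simp [mulVecLin_apply, mulVec, dotProduct, mul_apply]
      · simp [mulVecLin_apply]; rfl
    rw [hre, transpose_add, Matrix.mul_add, trace_add, hA, hB, add_zero]
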